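/- Let a ~ N(0, α) and b ~ N(0, 1) be independent. The function α ↦ P[a ≥ b | a ≥ 0, b ≥ 0] = (2/√(π²α)) ∫₀^∞ e^{-a²/(2α)} ∫₀^a e^{-b²/2} db da is monotonically increasing in α on (0, ∞). -/

import Mathlib

open MeasureTheory ProbabilityTheory Real
open scoped ENNReal NNReal

noncomputable def Gfun (x : ℝ) : ℝ := ∫ v in (0:ℝ)..x, Real.exp (-v ^ 2 / 2)

lemma expInt : ∀ a b : ℝ, IntervalIntegrable (fun v => Real.exp (-v ^ 2 / 2)) volume a b :=
  fun a b => (Continuous.intervalIntegrable (by continuity) a b)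

lemma Gfun_strictMono : StrictMono Gfun := by
  intro x y hxy
  have key : Gfun y - Gfun x = ∫ v in x..y, Real.exp (-v ^ 2 / 2) := by
    rw [Gfun, Gfun, ← intervalIntegral.integral_add_adjacent_intervals (expInt 0 x) (expInt x y)]
    ring
  have hpos : 0 < ∫ v in x..y, Real.exp (-v ^ 2 / 2) :=
    intervalIntegral.intervalIntegral_pos_of_pos_on (expInt x y)
      (fun v _ => Real.exp_pos _) hxy
  linarith

lemma Gfun_cont : Continuous Gfun :=
  intervalIntegral.continuous_primitive expInt 0

lemma expIntOn : IntegrableOn (fun v : ℝ => Real.exp (-v ^ 2 / 2)) (Set.Ioi 0) := by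
  have := (integrable_exp_neg_mul_sq (by norm_num : (0:ℝ) < 1/2)).integrableOn
    (s := Set.Ioi (0:ℝ))
  refine this.congr_fun (fun x _ => by ring_nf) measurableSet_Ioi

lemma Gfun_nonneg {x : ℝ} (hx : 0 ≤ x) : 0 ≤ Gfun x := by
  have h0 : Gfun 0 = 0 := by simp [Gfun]
  rcases eq_or_lt_of_le hx with h | h
  · simp [← h, h0]
  · have := Gfun_strictMono h
    linarith [h0 ▸ this]

lemma Gfun_le {x : ℝ} (hx : 0 ≤ x) :
    Gfun x ≤ ∫ v in Set.Ioi (0:ℝ), Real.exp (-v ^ 2 / 2) := by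
  rw [Gfun, intervalIntegral.integral_of_le hx]
  exact setIntegral_mono_set expIntOn (Filter.Eventually.of_forall fun v => (Real.exp_pos _).le)
    (HasSubset.Subset.eventuallyLE Set.Ioc_subset_Ioi_self)

lemma integrableH (α : ℝ) (hα : 0 < α) :
    IntegrableOn (fun t : ℝ => Real.exp (-t ^ 2 / 2) * Gfun (Real.sqrt α * t))
      (Set.Ioi 0) := by
  set C := ∫ v in Set.Ioi (0:ℝ), Real.exp (-v ^ 2 / 2) with hC
  have hCint : IntegrableOn (fun t : ℝ => C * Real.exp (-t ^ 2 / 2)) (Set.Ioi 0) :=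
    expIntOn.const_mul C
  have hC0 : 0 ≤ C :=
    setIntegral_nonneg measurableSet_Ioi fun v _ => (Real.exp_pos _).le
  refine MeasureTheory.Integrable.mono hCint ?_ ?_
  · exact (Continuous.mul (by continuity) (Gfun_cont.comp (by continuity))).aestronglyMeasurable
  · filter_upwards [ae_restrict_mem measurableSet_Ioi] with t ht
    have ht0 : (0:ℝ) ≤ Real.sqrt α * t := mul_nonneg (Real.sqrt_nonneg _) (le_of_lt ht)
    have h1 : 0 ≤ Gfun (Real.sqrt α * t) := Gfun_nonneg ht0
    have h2 : Gfun (Real.sqrt α * t) ≤ C := Gfun_le ht0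
    rw [norm_mul, Real.norm_eq_abs, Real.norm_eq_abs, abs_of_pos (Real.exp_pos _),
      abs_of_nonneg h1, Real.norm_eq_abs, abs_of_nonneg]
    · calc Real.exp (-t ^ 2 / 2) * Gfun (Real.sqrt α * t)
          ≤ Real.exp (-t ^ 2 / 2) * C := by nlinarith [Real.exp_pos (-t^2/2)]
        _ = C * Real.exp (-t ^ 2 / 2) := mul_comm _ _
    · exact mul_nonneg hC0 (Real.exp_pos _).le

lemma keyEq (α : ℝ) (hα : 0 < α) :
    2 / Real.sqrt (π ^ 2 * α) *
      ∫ u in Set.Ioi (0 : ℝ),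
        Real.exp (-u ^ 2 / (2 * α)) * ∫ v in (0 : ℝ)..u, Real.exp (-v ^ 2 / 2)
    = (2 / π) * ∫ t in Set.Ioi (0:ℝ), Real.exp (-t ^ 2 / 2) * Gfun (Real.sqrt α * t) := by
  have hs : Real.sqrt α > 0 := Real.sqrt_pos.mpr hα
  have hcov := integral_comp_mul_left_Ioi
    (fun u => Real.exp (-u ^ 2 / (2 * α)) * Gfun u) 0 hs
  rw [mul_zero] at hcov
  have heq : ∀ t : ℝ, Real.exp (-(Real.sqrt α * t) ^ 2 / (2 * α)) * Gfun (Real.sqrt α * t)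
      = Real.exp (-t ^ 2 / 2) * Gfun (Real.sqrt α * t) := by
    intro t
    congr 1
    rw [mul_pow, Real.sq_sqrt hα.le]
    congr 1
    field_simp
  simp only [heq] at hcov
  show 2 / Real.sqrt (π ^ 2 * α) *
      (∫ u in Set.Ioi (0 : ℝ), Real.exp (-u ^ 2 / (2 * α)) * Gfun u)
    = (2 / π) * ∫ t in Set.Ioi (0:ℝ), Real.exp (-t ^ 2 / 2) * Gfun (Real.sqrt α * t)
  rw [← inv_smul_eq_iff₀ (ne_of_gt (inv_pos.mpr hs))] at hcov
  rw [← hcov]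
  have hsq : Real.sqrt (π ^ 2 * α) = π * Real.sqrt α := by
    rw [Real.sqrt_mul (sq_nonneg π), Real.sqrt_sq Real.pi_pos.le]
  rw [hsq, smul_eq_mul, inv_inv]
  field_simp

theorem stmt5 :
    StrictMonoOn
      (fun α : ℝ => 2 / Real.sqrt (π ^ 2 * α) *
        ∫ u in Set.Ioi (0 : ℝ),
          Real.exp (-u ^ 2 / (2 * α)) * ∫ v in (0 : ℝ)..u, Real.exp (-v ^ 2 / 2))
      (Set.Ioi 0) := by
  intro a ha b hb hab
  simp only [Set.mem_Ioi] at ha hb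
  dsimp only
  rw [keyEq a ha, keyEq b hb]
  have hIa := integrableH a ha
  have hIb := integrableH b hb
  have hdiff : (∫ t in Set.Ioi (0:ℝ), Real.exp (-t ^ 2 / 2) * Gfun (Real.sqrt b * t))
      - (∫ t in Set.Ioi (0:ℝ), Real.exp (-t ^ 2 / 2) * Gfun (Real.sqrt a * t))
      = ∫ t in Set.Ioi (0:ℝ),
          Real.exp (-t ^ 2 / 2) * (Gfun (Real.sqrt b * t) - Gfun (Real.sqrt a * t)) := by
    rw [← integral_sub hIb hIa]
    congr 1
    ext t
    ring
  set d : ℝ → ℝ := fun t =>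
    Real.exp (-t ^ 2 / 2) * (Gfun (Real.sqrt b * t) - Gfun (Real.sqrt a * t)) with hd
  have hdint : IntegrableOn d (Set.Ioi 0) := by
    have h := hIb.sub hIa
    have he : d = (fun t => Real.exp (-t ^ 2 / 2) * Gfun (Real.sqrt b * t))
        - (fun t => Real.exp (-t ^ 2 / 2) * Gfun (Real.sqrt a * t)) := by
      funext t
      simp only [hd, Pi.sub_apply]
      ring
    rw [he]
    exact h
  have hnonneg : 0 ≤ᵐ[volume.restrict (Set.Ioi (0:ℝ))] d := by
    filter_upwards [ae_restrict_mem measurableSet_Ioi] with t ht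
    have h1 : Real.sqrt a * t < Real.sqrt b * t :=
      mul_lt_mul_of_pos_right (Real.sqrt_lt_sqrt ha.le hab) (Set.mem_Ioi.mp ht)
    have h2 := Gfun_strictMono h1
    have h3 := Real.exp_pos (-t ^ 2 / 2)
    simp only [hd, Pi.zero_apply]
    nlinarith
  have hpos : 0 < ∫ t in Set.Ioi (0:ℝ), d t := by
    rw [setIntegral_pos_iff_support_of_nonneg_ae hnonneg hdint]
    have hsub : Set.Ioi (0:ℝ) ⊆ Function.support d := by
      intro t ht
      simp only [Set.mem_Ioi] at ht
      have h1 : Real.sqrt a * t < Real.sqrt b * t :=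
        mul_lt_mul_of_pos_right (Real.sqrt_lt_sqrt ha.le hab) ht
      have h2 := Gfun_strictMono h1
      have h3 := Real.exp_pos (-t ^ 2 / 2)
      simp only [Function.mem_support, hd]
      nlinarith
    have : Function.support d ∩ Set.Ioi 0 = Set.Ioi 0 :=
      Set.inter_eq_self_of_subset_right hsub
    rw [this]
    simp
  have hlt := hdiff ▸ hpos
  have h2pi : (0:ℝ) < 2 / π := by positivity
  exact mul_lt_mul_of_pos_left (by linarith) h2pi
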